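/- For every integer n ≥ 4 with n ≠ 9, J̃(n,2) is maximal as a two-distance set in the hyperplane H(n,2); on the other hand, J̃(9,2) is not maximal as a two-distance set in H(9,2). -/

import Mathlib

noncomputable section

/-- The set of distances between distinct points of `S`. -/
def distSet {n : ℕ} (S : Set (EuclideanSpace ℝ (Fin n))) : Set ℝ :=
  {d | ∃ x ∈ S, ∃ y ∈ S, x ≠ y ∧ d = dist x y}

/-- `S` is an `s`-distance set: exactly `s` distances occur between distinct points. -/
def IsSDistanceSet {n : ℕ} (s : ℕ) (S : Set (EuclideanSpace ℝ (Fin n))) : Prop :=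
  (distSet S).Finite ∧ (distSet S).ncard = s

/-- The representation `J̃(n,m)` of the Johnson graph `J(n,m)`: vectors with exactly `m`
coordinates equal to `1` and the rest equal to `0`. -/
def JohnsonRep (n m : ℕ) : Set (EuclideanSpace ℝ (Fin n)) :=
  {x | (∀ i, x i = 0 ∨ x i = 1) ∧ {i : Fin n | x i = 1}.ncard = m}

/-- The hyperplane `H(n,m) = {x : ∑ x_i = m}`. -/
def Hyp (n m : ℕ) : Set (EuclideanSpace ℝ (Fin n)) :=
  {x | ∑ i, x i = (m : ℝ)}

/-- `J̃(n,m)` is maximal as an `m`-distance set in the hyperplane `H(n,m)`. -/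
def JohnsonRepMaximal (n m : ℕ) : Prop :=
  ¬∃ y ∈ Hyp n m \ JohnsonRep n m, IsSDistanceSet m (JohnsonRep n m ∪ {y})

def stdPair {n : ℕ} (i j : Fin n) : EuclideanSpace ℝ (Fin n) :=
  WithLp.toLp 2 (fun k => (if k = i then (1:ℝ) else 0) + (if k = j then 1 else 0))

lemma sum_mul_stdPair {n : ℕ} (f : Fin n → ℝ) (i j : Fin n) :
    ∑ k, f k * stdPair i j k = f i + f j := by
  simp [stdPair, mul_add, Finset.sum_add_distrib, mul_ite, Finset.sum_ite_eq']

lemma dist_sq_stdPair {n : ℕ} (y : EuclideanSpace ℝ (Fin n)) {i j : Fin n} (h : i ≠ j) :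
    dist y (stdPair i j) ^ 2 = (∑ k, y k ^ 2) - 2 * (y i + y j) + 2 := by
  rw [EuclideanSpace.dist_eq, Real.sq_sqrt (by positivity)]
  have h1 : ∀ k, dist (y k) (stdPair i j k) ^ 2
      = y k ^ 2 - 2 * (y k * stdPair i j k) + stdPair i j k * stdPair i j k := by
    intro k; rw [Real.dist_eq, sq_abs]; ring
  have h2 : ∑ k, (stdPair i j k) * stdPair i j k = 2 := by
    rw [sum_mul_stdPair (stdPair i j) i j]
    simp [stdPair, h, h.symm]; norm_num
  simp_rw [h1]
  rw [Finset.sum_add_distrib, Finset.sum_sub_distrib, ← Finset.mul_sum,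
    sum_mul_stdPair, h2]

lemma stdPair_mem {n : ℕ} {i j : Fin n} (h : i ≠ j) : stdPair i j ∈ JohnsonRep n 2 := by
  constructor
  · intro k
    rcases eq_or_ne k i with rfl | hki <;> rcases eq_or_ne k j with rfl | hkj <;>
      simp_all [stdPair]
  · have hset : {k : Fin n | stdPair i j k = 1} = {i, j} := by
      ext k
      rcases eq_or_ne k i with rfl | hki <;> rcases eq_or_ne k j with rfl | hkj <;>
        simp_all [stdPair]
    rw [hset, Set.ncard_pair h]

lemma johnson_two_eq {n : ℕ} {x : EuclideanSpace ℝ (Fin n)} (hx : x ∈ JohnsonRep n 2) :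
    ∃ i j, i ≠ j ∧ x = stdPair i j := by
  obtain ⟨h01, hcard⟩ := hx
  obtain ⟨i, j, hij, hset⟩ := Set.ncard_eq_two.mp hcard
  refine ⟨i, j, hij, PiLp.ext fun k => ?_⟩
  have hmem : (x k = 1) ↔ k ∈ ({i, j} : Set (Fin n)) := by rw [← hset]; rfl
  rcases eq_or_ne k i with rfl | hki
  · rw [hmem.mpr (by simp)]; simp [stdPair, hij]
  · rcases eq_or_ne k j with rfl | hkj
    · rw [hmem.mpr (by simp)]; simp [stdPair, hki]
    · rcases h01 k with h0 | h1
      · rw [h0]; simp [stdPair, hki, hkj]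
      · exact absurd (hmem.mp h1) (by simp [hki, hkj])

lemma mem_distSet {n : ℕ} {S : Set (EuclideanSpace ℝ (Fin n))} {x y : EuclideanSpace ℝ (Fin n)}
    (hx : x ∈ S) (hy : y ∈ S) (hne : x ≠ y) : dist x y ∈ distSet S :=
  ⟨x, hx, y, hy, hne, rfl⟩

lemma stdPair_ne {n : ℕ} {i j k l : Fin n} (hji : j ≠ i) (hjk : j ≠ k) (hjl : j ≠ l) :
    stdPair i j ≠ stdPair k l := by
  intro h
  have := congrArg (fun v : EuclideanSpace ℝ (Fin n) => v j) h
  simp [stdPair, hji, hjk, hjl] at this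

lemma eq_sqrt_two {d : ℝ} (hd : 0 ≤ d) (h : d ^ 2 = 2) : d = Real.sqrt 2 := by
  rw [← Real.sqrt_sq hd, h]

lemma eq_two {d : ℝ} (hd : 0 ≤ d) (h : d ^ 2 = 4) : d = 2 := by
  nlinarith

lemma stdPair_dist_cases {n : ℕ} {i j k l : Fin n} (hij : i ≠ j) (hkl : k ≠ l)
    (hne : stdPair i j ≠ stdPair k l) :
    dist (stdPair i j) (stdPair k l) ^ 2 = 2 ∨ dist (stdPair i j) (stdPair k l) ^ 2 = 4 := by
  have hd := dist_sq_stdPair (stdPair i j) hkl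
  have hQ : ∑ m, (stdPair i j m) ^ 2 = 2 := by
    simp_rw [sq]
    rw [sum_mul_stdPair (stdPair i j) i j]
    simp [stdPair, hij, hij.symm]; norm_num
  have hcomm : ∀ (a b : Fin n), stdPair a b = stdPair b a := fun a b =>
    PiLp.ext fun m => add_comm _ _
  have hone : ∀ m, stdPair i j m = 1 → m = i ∨ m = j := by
    intro m hm
    by_contra hc
    push_neg at hc
    simp [stdPair, hc.1, hc.2] at hm
  have hv : ∀ m, stdPair i j m = 0 ∨ stdPair i j m = 1 := (stdPair_mem hij).1
  have hs : stdPair i j k + stdPair i j l = 0 ∨ stdPair i j k + stdPair i j l = 1 := by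
    rcases hv k with h1 | h1 <;> rcases hv l with h2 | h2
    · left; rw [h1, h2]; ring
    · right; rw [h1, h2]; ring
    · right; rw [h1, h2]; ring
    · exfalso
      rcases hone k h1 with rfl | rfl <;> rcases hone l h2 with rfl | rfl <;>
        first | exact hkl rfl | exact hne rfl | exact hne (hcomm _ _)
  rw [hQ] at hd
  rcases hs with h0 | h1
  · right; rw [hd, h0]; ring
  · left; rw [hd, h1]; ring

lemma sum_sq_stdPair {n : ℕ} {i j : Fin n} (hij : i ≠ j) :
    ∑ m, stdPair i j m ^ 2 = 2 := by
  simp_rw [sq]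
  rw [sum_mul_stdPair (stdPair i j) i j]
  simp [stdPair, hij, hij.symm]; norm_num

lemma sqrt2_ne_two : Real.sqrt 2 ≠ 2 := by
  have h1 : Real.sqrt 2 < 2 := by
    nlinarith [Real.sq_sqrt (by norm_num : (0:ℝ) ≤ 2), Real.sqrt_nonneg 2]
  exact ne_of_lt h1

lemma dist_stdPair_share {n : ℕ} {i j k : Fin n} (hij : i ≠ j) (hik : i ≠ k) (hjk : j ≠ k) :
    dist (stdPair i j) (stdPair i k) = Real.sqrt 2 := by
  apply eq_sqrt_two dist_nonneg
  rw [dist_sq_stdPair _ hik, sum_sq_stdPair hij]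
  have e : stdPair i j i + stdPair i j k = 1 := by
    simp [stdPair, hij, Ne.symm hik, Ne.symm hjk]
  rw [e]; ring

lemma dist_stdPair_disjoint {n : ℕ} {i j k l : Fin n} (hij : i ≠ j)
    (hik : i ≠ k) (hil : i ≠ l) (hjk : j ≠ k) (hjl : j ≠ l) (hkl : k ≠ l) :
    dist (stdPair i j) (stdPair k l) = 2 := by
  apply eq_two dist_nonneg
  rw [dist_sq_stdPair _ hkl, sum_sq_stdPair hij]
  have e : stdPair i j k + stdPair i j l = 0 := by
    simp [stdPair, Ne.symm hik, Ne.symm hil, Ne.symm hjk, Ne.symm hjl]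
  rw [e]; ring

lemma distSet_mono {n : ℕ} {S T : Set (EuclideanSpace ℝ (Fin n))} (h : S ⊆ T) :
    distSet S ⊆ distSet T := by
  rintro d ⟨x, hx, y, hy, hxy, rfl⟩
  exact ⟨x, h hx, y, h hy, hxy, rfl⟩

lemma pair_subset_distSet {n : ℕ} (hn : 4 ≤ n) :
    ({Real.sqrt 2, 2} : Set ℝ) ⊆ distSet (JohnsonRep n 2) := by
  set i0 : Fin n := ⟨0, by omega⟩
  set i1 : Fin n := ⟨1, by omega⟩
  set i2 : Fin n := ⟨2, by omega⟩
  set i3 : Fin n := ⟨3, by omega⟩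
  have h01 : i0 ≠ i1 := by simp [i0, i1]
  have h02 : i0 ≠ i2 := by simp [i0, i2]
  have h03 : i0 ≠ i3 := by simp [i0, i3]
  have h12 : i1 ≠ i2 := by simp [i1, i2]
  have h13 : i1 ≠ i3 := by simp [i1, i3]
  have h23 : i2 ≠ i3 := by simp [i2, i3]
  intro d hd
  rcases hd with rfl | rfl
  · rw [← dist_stdPair_share h01 h02 h12]
    exact mem_distSet (stdPair_mem h01) (stdPair_mem h02)
      (stdPair_ne (Ne.symm h01) (Ne.symm h01) h12)
  · rw [← dist_stdPair_disjoint h01 h02 h03 h12 h13 h23]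
    exact mem_distSet (stdPair_mem h01) (stdPair_mem h23)
      (stdPair_ne (Ne.symm h01) h12 h13)

def y9 : EuclideanSpace ℝ (Fin 9) := WithLp.toLp 2 (fun k => if k = 0 then (-2/3 : ℝ) else 1/3)

lemma y9_sum : ∑ k, y9 k = 2 := by
  simp [y9, Fin.sum_univ_succ, Fin.succ_ne_zero]
  norm_num

lemma y9_sumsq : ∑ k, y9 k ^ 2 = 4/3 := by
  simp [y9, Fin.sum_univ_succ, Fin.succ_ne_zero]
  norm_num

lemma y9_not_johnson : y9 ∉ JohnsonRep 9 2 := by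
  rintro ⟨h1, -⟩
  rcases h1 0 with h | h <;> simp [y9] at h <;> norm_num at h

lemma dist_y9_stdPair {i j : Fin 9} (hij : i ≠ j) :
    dist y9 (stdPair i j) = Real.sqrt 2 ∨ dist y9 (stdPair i j) = 2 := by
  have hd := dist_sq_stdPair y9 hij
  rw [y9_sumsq] at hd
  have hy : ∀ k : Fin 9, k ≠ 0 → y9 k = 1/3 := fun k hk => by simp [y9, hk]
  have hy0 : y9 0 = -2/3 := by simp [y9]
  rcases eq_or_ne i 0 with rfl | hi
  · rw [hy0, hy j (fun h => hij h.symm)] at hd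
    right
    apply eq_two dist_nonneg
    rw [hd]; norm_num
  · rcases eq_or_ne j 0 with rfl | hj
    · rw [hy0, hy i hi] at hd
      right
      apply eq_two dist_nonneg
      rw [hd]; norm_num
    · rw [hy i hi, hy j hj] at hd
      left
      apply eq_sqrt_two dist_nonneg
      rw [hd]; norm_num

lemma johnson_dist_cases {n : ℕ} {p q : EuclideanSpace ℝ (Fin n)}
    (hp : p ∈ JohnsonRep n 2) (hq : q ∈ JohnsonRep n 2) (hpq : p ≠ q) :
    dist p q = Real.sqrt 2 ∨ dist p q = 2 := by
  obtain ⟨i, j, hij, rfl⟩ := johnson_two_eq hp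
  obtain ⟨k, l, hkl, rfl⟩ := johnson_two_eq hq
  rcases stdPair_dist_cases hij hkl hpq with h | h
  · exact Or.inl (eq_sqrt_two dist_nonneg h)
  · exact Or.inr (eq_two dist_nonneg h)

lemma part2 : ¬ JohnsonRepMaximal 9 2 := by
  rw [JohnsonRepMaximal, not_not]
  refine ⟨y9, ⟨?_, y9_not_johnson⟩, ?_⟩
  · show ∑ k, y9 k = ((2:ℕ):ℝ)
    rw [y9_sum]; norm_num
  · have hset : distSet (JohnsonRep 9 2 ∪ {y9}) = {Real.sqrt 2, 2} := by
      apply Set.Subset.antisymm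
      · rintro d ⟨p, hp, q, hq, hpq, rfl⟩
        rcases hp with hp | hp <;> rcases hq with hq | hq
        · exact johnson_dist_cases hp hq hpq
        · rw [Set.mem_singleton_iff] at hq; subst hq
          obtain ⟨i, j, hij, rfl⟩ := johnson_two_eq hp
          rw [dist_comm]
          exact dist_y9_stdPair hij
        · rw [Set.mem_singleton_iff] at hp; subst hp
          obtain ⟨i, j, hij, rfl⟩ := johnson_two_eq hq
          exact dist_y9_stdPair hij
        · rw [Set.mem_singleton_iff] at hp hq
          exact absurd (hp.trans hq.symm) hpq
      · exact (pair_subset_distSet (by norm_num)).trans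
          (distSet_mono Set.subset_union_left)
    constructor
    · rw [hset]; exact (Set.finite_singleton _).insert _
    · rw [hset, Set.ncard_pair sqrt2_ne_two]
lemma third_index {n : ℕ} (hn : 3 ≤ n) (i j : Fin n) : ∃ k, k ≠ i ∧ k ≠ j := by
  have h1 : (({i, j} : Finset (Fin n))ᶜ).Nonempty := by
    rw [← Finset.card_pos, Finset.card_compl]
    have h2 : ({i, j} : Finset (Fin n)).card ≤ 2 :=
      (Finset.card_insert_le _ _).trans (by simp)
    simp only [Fintype.card_fin]
    omega
  obtain ⟨k, hk⟩ := h1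
  simp only [Finset.mem_compl, Finset.mem_insert, Finset.mem_singleton, not_or] at hk
  exact ⟨k, hk.1, hk.2⟩

lemma two_other {n : ℕ} (hn : 3 ≤ n) (i : Fin n) : ∃ k l, k ≠ l ∧ k ≠ i ∧ l ≠ i := by
  have h1 : 1 < (({i} : Finset (Fin n))ᶜ).card := by
    rw [Finset.card_compl]
    simp only [Fintype.card_fin, Finset.card_singleton]
    omega
  obtain ⟨k, hk, l, hl, hkl⟩ := Finset.one_lt_card.mp h1
  simp only [Finset.mem_compl, Finset.mem_singleton] at hk hl
  exact ⟨k, l, hkl, hk, hl⟩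

lemma aux_one_diff {n : ℕ} (hn : 4 ≤ n) (hne : (n:ℝ) ≠ 9) (y : Fin n → ℝ) (Q : ℝ)
    (hQ : Q = ∑ k, y k ^ 2)
    (hsum : ∑ k, y k = 2)
    (hP : ∀ i j : Fin n, i ≠ j → 2 * (y i + y j) = Q ∨ 2 * (y i + y j) = Q - 2)
    (i0 : Fin n) (b : ℝ) (hb : ∀ k, k ≠ i0 → y k = b)
    (hrel : y i0 = b + 1 ∨ b = y i0 + 1) : False := by
  have hn' : (4:ℝ) ≤ (n:ℝ) := by exact_mod_cast hn
  obtain ⟨k, l, hkl, hki, hli⟩ := two_other (by omega) i0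
  set a := y i0 with ha
  set N := (n:ℝ) with hN
  -- sum formula
  have hcard : (Finset.univ.erase i0).card = n - 1 := by
    rw [Finset.card_erase_of_mem (Finset.mem_univ _), Finset.card_univ, Fintype.card_fin]
  have hcast : ((n - 1 : ℕ) : ℝ) = N - 1 := by
    have : 1 ≤ n := by omega
    push_cast [Nat.cast_sub this]; ring
  have hsum' : a + (N - 1) * b = 2 := by
    rw [← hsum, ← Finset.add_sum_erase _ _ (Finset.mem_univ i0)]
    congr 1
    rw [Finset.sum_congr rfl (fun m hm => hb m (Finset.ne_of_mem_erase hm)),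
      Finset.sum_const, hcard, nsmul_eq_mul, hcast]
  have hQ' : Q = a ^ 2 + (N - 1) * b ^ 2 := by
    rw [hQ, ← Finset.add_sum_erase _ _ (Finset.mem_univ i0)]
    congr 1
    rw [Finset.sum_congr rfl (fun m hm => by rw [hb m (Finset.ne_of_mem_erase hm)]),
      Finset.sum_const, hcard, nsmul_eq_mul, hcast]
  have hP1 : 2 * (a + b) = Q ∨ 2 * (a + b) = Q - 2 := by
    have := hP i0 k (Ne.symm hki)
    rwa [hb k hki] at this
  have hP2 : 2 * (b + b) = Q ∨ 2 * (b + b) = Q - 2 := by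
    have := hP k l hkl
    rwa [hb k hki, hb l hli] at this
  rcases hrel with h | h
  · -- a = b + 1
    rcases hP1 with h1 | h1 <;> rcases hP2 with h2 | h2
    · linarith
    · -- Q = 2(a+b) = 4b + 2
      have hNb : N * b = 1 := by linear_combination hsum' - h
      have e1 : N * b ^ 2 = 2 * b + 1 := by linear_combination -hQ' - h1 - (a+b-1) * h
      have e2 : N * b ^ 2 = b := by linear_combination b * hNb
      have hb1 : b = -1 := by linarith
      rw [hb1] at hNb
      linarith
    · linarith
    · linarith
  · -- b = a + 1, i.e. a = b - 1
    rcases hP1 with h1 | h1 <;> rcases hP2 with h2 | h2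
    · linarith
    · linarith
    · -- Q = 4b
      have hNb : N * b = 3 := by linear_combination hsum' + h
      have e1 : N * b ^ 2 = 6 * b - 1 := by linear_combination -hQ' - h2 + (a+b-1) * h
      have e2 : N * b ^ 2 = 3 * b := by linear_combination b * hNb
      have hb1 : b = 1/3 := by linarith
      rw [hb1] at hNb
      apply hne
      linarith
    · linarith

lemma part1_core {n : ℕ} (hn : 4 ≤ n) (hne : (n:ℝ) ≠ 9) (y : Fin n → ℝ) (Q : ℝ)
    (hQ : Q = ∑ k, y k ^ 2)
    (hsum : ∑ k, y k = 2)
    (hP : ∀ i j : Fin n, i ≠ j → 2 * (y i + y j) = Q ∨ 2 * (y i + y j) = Q - 2) :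
    False := by
  have hn' : (4:ℝ) ≤ (n:ℝ) := by exact_mod_cast hn
  have hdiff : ∀ i j : Fin n, y i = y j ∨ y i = y j + 1 ∨ y j = y i + 1 := by
    intro i j
    rcases eq_or_ne i j with rfl | hij
    · exact Or.inl rfl
    obtain ⟨k, hki, hkj⟩ := third_index (by omega) i j
    rcases hP i k (Ne.symm hki) with h1 | h1 <;> rcases hP j k (Ne.symm hkj) with h2 | h2 <;>
      first
        | (left; linarith)
        | (right; left; linarith)
        | (right; right; linarith)
  by_cases hall : ∀ i j : Fin n, y i = y j
  · set i0 : Fin n := ⟨0, by omega⟩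
    set i1 : Fin n := ⟨1, by omega⟩
    have h01 : i0 ≠ i1 := by simp [i0, i1]
    set b := y i0 with hb
    have hsb : (n:ℝ) * b = 2 := by
      rw [← hsum, Finset.sum_congr rfl (fun k _ => hall k i0), Finset.sum_const,
        Finset.card_univ, Fintype.card_fin, nsmul_eq_mul]
    have hQb : Q = (n:ℝ) * b ^ 2 := by
      rw [hQ, Finset.sum_congr rfl (fun k _ => by rw [hall k i0]), Finset.sum_const,
        Finset.card_univ, Fintype.card_fin, nsmul_eq_mul]
    have hQb2 : Q = 2 * b := by
      rw [hQb]; linear_combination b * hsb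
    rcases hP i0 i1 h01 with h | h <;> rw [hall i1 i0, ← hb, hQb2] at h
    · have hb0 : b = 0 := by linarith
      rw [hb0] at hsb; linarith
    · have hb0 : b = -1 := by linarith
      rw [hb0] at hsb; linarith
  · push_neg at hall
    obtain ⟨i, j, hij⟩ := hall
    have hval : ∀ m, y m = y i ∨ y m = y j := by
      intro m
      by_contra hc
      push_neg at hc
      rcases (hdiff m i).resolve_left hc.1 with h1 | h1 <;>
        rcases (hdiff m j).resolve_left hc.2 with h2 | h2 <;>
        rcases (hdiff i j).resolve_left hij with h3 | h3 <;>
        first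
          | exact hij (by linarith)
          | linarith
    have hkey : (∀ k, k ≠ i → y k = y j) ∨ (∀ k, k ≠ j → y k = y i) := by
      by_contra hc
      push_neg at hc
      obtain ⟨⟨k, hki, hkj⟩, ⟨l, hlj, hli⟩⟩ := hc
      have hyk : y k = y i := (hval k).resolve_right hkj
      have hyl : y l = y j := (hval l).resolve_left hli
      have hkj' : k ≠ j := fun h => hij (h ▸ hyk).symm
      have hli' : l ≠ i := fun h => hij (h ▸ hyl)
      have hkl : k ≠ l := fun h => hij (hyk.symm.trans (h ▸ hyl))
      have h1 : 2 * (y i + y k) = Q ∨ 2 * (y i + y k) = Q - 2 := hP i k (Ne.symm hki)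
      have h2 : 2 * (y j + y l) = Q ∨ 2 * (y j + y l) = Q - 2 := hP j l (Ne.symm hlj)
      rw [hyk] at h1
      rw [hyl] at h2
      rcases (hdiff i j).resolve_left hij with h3 | h3 <;>
        rcases h1 with h1 | h1 <;> rcases h2 with h2 | h2 <;> linarith
    rcases hkey with hk | hk
    · exact aux_one_diff hn hne y Q hQ hsum hP i (y j) hk
        (by rcases (hdiff i j).resolve_left hij with h | h
            · exact Or.inl h
            · exact Or.inr h)
    · exact aux_one_diff hn hne y Q hQ hsum hP j (y i) hk
        (by rcases (hdiff i j).resolve_left hij with h | h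
            · exact Or.inr h
            · exact Or.inl h)


lemma part1 {n : ℕ} (hn : 4 ≤ n) (h9 : n ≠ 9) : JohnsonRepMaximal n 2 := by
  rintro ⟨y, ⟨hyH, hyJ⟩, hfin, hcard⟩
  have hsub : ({Real.sqrt 2, 2} : Set ℝ) ⊆ distSet (JohnsonRep n 2 ∪ {y}) :=
    (pair_subset_distSet hn).trans (distSet_mono Set.subset_union_left)
  have hD : ({Real.sqrt 2, 2} : Set ℝ) = distSet (JohnsonRep n 2 ∪ {y}) :=
    Set.eq_of_subset_of_ncard_le hsub (by rw [hcard, Set.ncard_pair sqrt2_ne_two]) hfin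
  have hsum : ∑ k, y k = 2 := by simpa [Hyp] using hyH
  apply part1_core hn (fun h => h9 (by exact_mod_cast h)) y (∑ k, y k ^ 2) rfl hsum
  intro i j hij
  have hyne : y ≠ stdPair i j := fun he => hyJ (he ▸ stdPair_mem hij)
  have hmem : dist y (stdPair i j) ∈ distSet (JohnsonRep n 2 ∪ {y}) :=
    mem_distSet (Set.mem_union_right _ rfl) (Set.mem_union_left _ (stdPair_mem hij)) hyne
  rw [← hD] at hmem
  have hd := dist_sq_stdPair y hij
  simp only [Set.mem_insert_iff, Set.mem_singleton_iff] at hmem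
  rcases hmem with h | h
  · left
    have h2 : dist y (stdPair i j) ^ 2 = 2 := by rw [h, Real.sq_sqrt]; norm_num
    rw [hd] at h2; linarith
  · right
    have h2 : dist y (stdPair i j) ^ 2 = 4 := by rw [h]; norm_num
    rw [hd] at h2; linarith

theorem johnsonRep_two_maximal_iff (n : ℕ) (hn : 4 ≤ n) :
    (n ≠ 9 → JohnsonRepMaximal n 2) ∧ ¬ JohnsonRepMaximal 9 2 :=
  ⟨fun h9 => part1 hn h9, part2⟩
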